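/- (Algebraic core of the paper's Theorem 2.2, via the Bott residue formula.) Let n, r ≥ 1 and suppose given nonzero integers k_1^{(i)},…,k_{2n}^{(i)} ∈ ℤ∖{0} for each i = 1,…,r (rotation numbers at the fixed points), and an integer P_λ for each partition λ of weight at most n (the Pontrjagin numbers). Define, as rational numbers, μ_i := 1/∏_{j=1}^{2n} k_j^{(i)} and a_j^{(i)} := e_j((k_1^{(i)})², …, (k_{2n}^{(i)})²) for 1 ≤ j ≤ n, where e_j is the j-th elementary symmetric polynomial. Assume the localization identities ∑_{i=1}^r μ_i · a_λ^{(i)} = P_λ hold for every partition λ of weight at most n, and that P_λ = 0 whenever the weight of λ is strictly less than n. If λ is a partition of weight n with P_λ ≠ 0, then r ≥ m(λ) + 1. -/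

import Mathlib

open Polynomial Finset

lemma vandermonde_kill (r M : ℕ) (c x : Fin r → ℚ)
    (h : ∀ t < r, ∑ i, c i * x i ^ t = 0) :
    ∑ i, c i * x i ^ M = 0 := by
  rcases Nat.eq_zero_or_pos r with hr | hr
  · subst hr; simp
  classical
  set p : ℚ[X] := ∏ i, (X - C (x i)) with hp
  have hmon : p.Monic := monic_prod_of_monic _ _ fun i _ => monic_X_sub_C _
  have hproot : ∀ i, p.eval (x i) = 0 := by
    intro i
    rw [hp, eval_prod]
    exact Finset.prod_eq_zero (Finset.mem_univ i) (by simp)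
  set q : ℚ[X] := (X ^ M) %ₘ p with hq
  have hdegp : p.natDegree = r := by
    rw [hp, natDegree_prod _ _ (fun i _ => X_sub_C_ne_zero (x i))]
    simp
  have hqdeg : q.natDegree < r := by
    rcases eq_or_ne q 0 with h0 | h0
    · rw [h0]; simpa using hr
    · have h2 := natDegree_modByMonic_lt (X ^ M : ℚ[X]) hmon (by
        intro h1
        rw [h1] at hdegp
        simp at hdegp
        omega)
      exact hdegp ▸ h2
  have hqeval : ∀ i, q.eval (x i) = x i ^ M := by
    intro i
    have hdiv := modByMonic_add_div (X ^ M : ℚ[X]) p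
    have := congrArg (Polynomial.eval (x i)) hdiv
    simpa [hproot i] using this
  calc ∑ i, c i * x i ^ M = ∑ i, c i * ∑ t ∈ Finset.range r, q.coeff t * x i ^ t := by
        refine Finset.sum_congr rfl fun i _ => ?_
        rw [← eval_eq_sum_range' hqdeg, hqeval i]
    _ = ∑ t ∈ Finset.range r, q.coeff t * ∑ i, c i * x i ^ t := by
        simp_rw [Finset.mul_sum]
        rw [Finset.sum_comm]
        refine Finset.sum_congr rfl fun t _ => Finset.sum_congr rfl fun i _ => by ring
    _ = 0 := by
        refine Finset.sum_eq_zero fun t ht => ?_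
        rw [h t (Finset.mem_range.mp ht), mul_zero]



/-- **algebraic core of Theorem 2.2, via the Bott residue formula.**
`k i j` (`j` ranging over `Fin (2*n)`) are the nonzero rotation numbers at the `i`-th
fixed point; `P m` is the Pontrjagin number attached to the partition with multiplicity
vector `m : Fin n → ℕ` (index `j` stands for part size `j+1`; weight is
`∑ j, (j+1) * m j`, `m(λ) = Finset.univ.sup m`). In `ℚ` define
`μ i = 1 / ∏ j, k i j` and `a i j = e_{j+1}((k i 1)², …, (k i (2n))²)`, where
`e_{j+1}` is the `(j+1)`-st elementary symmetric polynomial (written out as a sum over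
subsets of cardinality `j+1`). Assuming the localization identities
`∑ i, μ i * ∏ j, (a i j)^(m j) = P m` for all partitions of weight `≤ n`, and that
`P m = 0` for partitions of weight `< n`: if `λ` has weight `n` and `P λ ≠ 0`, then the
number of fixed points satisfies `r ≥ m(λ) + 1`. -/
theorem circle_action_fixed_points_lower_bound
    (n r : ℕ) (hn : 1 ≤ n) (hr : 1 ≤ r)
    (k : Fin r → Fin (2 * n) → ℤ)
    (hk : ∀ i j, k i j ≠ 0)
    (P : (Fin n → ℕ) → ℤ)
    (μ : Fin r → ℚ) (a : Fin r → Fin n → ℚ)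
    (hμ : ∀ i, μ i = 1 / ∏ j, (k i j : ℚ))
    (ha : ∀ i (j : Fin n), a i j =
      ∑ S ∈ Finset.univ.powersetCard (j.1 + 1), ∏ t ∈ S, ((k i t : ℚ)) ^ 2)
    (hloc : ∀ m : Fin n → ℕ, (∑ j, (j.1 + 1) * m j) ≤ n →
      ∑ i, μ i * ∏ j, (a i j) ^ (m j) = (P m : ℚ))
    (hvanish : ∀ m : Fin n → ℕ, (∑ j, (j.1 + 1) * m j) < n → P m = 0)
    (m : Fin n → ℕ)
    (hweight : (∑ j, (j.1 + 1) * m j) = n)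
    (hP : P m ≠ 0) :
    Finset.univ.sup m + 1 ≤ r := by
  classical
  by_contra hcon
  push_neg at hcon
  have hrM : r ≤ Finset.univ.sup m := by omega
  obtain ⟨j₀, -, hj₀⟩ := Finset.exists_mem_eq_sup (Finset.univ : Finset (Fin n))
    (Finset.univ_nonempty_iff.mpr (Fin.pos_iff_nonempty.mp hn)) m
  have hrj : r ≤ m j₀ := hj₀ ▸ hrM
  set c : Fin r → ℚ := fun i => μ i * ∏ j ∈ Finset.univ.erase j₀, (a i j) ^ (m j) with hc
  set x : Fin r → ℚ := fun i => a i j₀ with hx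
  have hsplitw : (j₀.1 + 1) * m j₀ + ∑ j ∈ Finset.univ.erase j₀, (j.1 + 1) * m j = n := by
    rw [Finset.add_sum_erase _ (fun j : Fin n => (j.1 + 1) * m j) (Finset.mem_univ j₀)]
    exact hweight
  have hprod : ∀ (i : Fin r) (t : ℕ),
      μ i * ∏ j, (a i j) ^ (Function.update m j₀ t j) = c i * x i ^ t := by
    intro i t
    rw [← Finset.mul_prod_erase Finset.univ _ (Finset.mem_univ j₀)]
    rw [Function.update_self]
    have he : ∏ j ∈ Finset.univ.erase j₀, a i j ^ Function.update m j₀ t j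
         = ∏ j ∈ Finset.univ.erase j₀, a i j ^ m j :=
      Finset.prod_congr rfl fun j hj => by
        rw [Function.update_of_ne (Finset.ne_of_mem_erase hj)]
    rw [he, hc, hx]
    ring
  have hzero : ∀ t < r, ∑ i, c i * x i ^ t = 0 := by
    intro t ht
    have htM : t < m j₀ := lt_of_lt_of_le ht hrj
    have hw : ∑ j, (j.1 + 1) * Function.update m j₀ t j
        = (j₀.1 + 1) * t + ∑ j ∈ Finset.univ.erase j₀, (j.1 + 1) * m j := by
      rw [← Finset.add_sum_erase _ (fun j : Fin n => (j.1 + 1) * Function.update m j₀ t j)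
        (Finset.mem_univ j₀), Function.update_self]
      congr 1
      exact Finset.sum_congr rfl fun j hj => by
        rw [Function.update_of_ne (Finset.ne_of_mem_erase hj)]
    have hlt : ∑ j, (j.1 + 1) * Function.update m j₀ t j < n := by
      rw [hw]
      have hmul : (j₀.1 + 1) * t < (j₀.1 + 1) * m j₀ :=
        (mul_lt_mul_iff_right₀ (Nat.succ_pos j₀.1)).mpr htM
      omega
    have hl := hloc _ (le_of_lt hlt)
    rw [hvanish _ hlt] at hl
    simp_rw [hprod] at hl
    simpa using hl
  have hM : ∑ i, c i * x i ^ (m j₀) = (P m : ℚ) := by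
    rw [← hloc m (le_of_eq hweight)]
    refine Finset.sum_congr rfl fun i _ => ?_
    have h3 := hprod i (m j₀)
    rw [Function.update_eq_self] at h3
    exact h3.symm
  have h4 := vandermonde_kill r (m j₀) c x hzero
  rw [hM] at h4
  exact hP (by exact_mod_cast h4)
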